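/- Let λ, μ, p, ν₁, ν₂ > 0 and let n be a positive integer. Define r₀⁽ⁿ⁾ = λpν₁/(nμ(λ + ν₁ + nμ)), r₁⁽ⁿ⁾ = λp(λ + nμ)/(nμ(λ + ν₁ + nμ)), and r₂⁽ⁿ⁾ = [λp((λ + nμ)² + nμν₁)/(nμ(ν₂(λ + ν₁ + (n+1)μ) + λpν₁))]·[(λ + ν₁ + (n+1)μ)/(λ + ν₁ + nμ)]. Then r₀⁽ⁿ⁾ + r₁⁽ⁿ⁾ = λp/(nμ), and λ·r₁⁽ⁿ⁾ - (λp + ν₂ - (n+1)μ·r₁⁽ⁿ⁺¹⁾)·r₂⁽ⁿ⁾ = -λp. -/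
import Mathlib


theorem stmt_1 (lam mu p nu1 nu2 : ℝ) (hlam : 0 < lam) (hmu : 0 < mu) (hp : 0 < p)
    (hnu1 : 0 < nu1) (hnu2 : 0 < nu2) (n : ℕ) (hn : 1 ≤ n)
    (r0 r1 r2 : ℕ → ℝ)
    (hr0 : ∀ m, r0 m = lam * p * nu1 / (m * mu * (lam + nu1 + m * mu)))
    (hr1 : ∀ m, r1 m = lam * p * (lam + m * mu) / (m * mu * (lam + nu1 + m * mu)))
    (hr2 : ∀ m, r2 m =
      lam * p * ((lam + m * mu) ^ 2 + m * mu * nu1) /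
        (m * mu * (nu2 * (lam + nu1 + (m + 1) * mu) + lam * p * nu1)) *
        ((lam + nu1 + (m + 1) * mu) / (lam + nu1 + m * mu))) :
    r0 n + r1 n = lam * p / (n * mu) ∧
    lam * r1 n - (lam * p + nu2 - (n + 1) * mu * r1 (n + 1)) * r2 n = -(lam * p) := by
  have hN : (1:ℝ) ≤ (n:ℝ) := by exact_mod_cast hn
  have hNpos : (0:ℝ) < (n:ℝ) := lt_of_lt_of_le one_pos hN
  have h1 : (n:ℝ) * mu ≠ 0 := by positivity
  have h2 : lam + nu1 + (n:ℝ) * mu ≠ 0 := by positivity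
  have h3 : lam + nu1 + ((n:ℝ) + 1) * mu ≠ 0 := by positivity
  have h4 : nu2 * (lam + nu1 + ((n:ℝ) + 1) * mu) + lam * p * nu1 ≠ 0 := by positivity
  have h5 : ((n:ℝ) + 1) * mu ≠ 0 := by positivity
  constructor
  · rw [hr0, hr1]
    field_simp
    ring
  · rw [hr1 n, hr1 (n + 1), hr2 n]
    push_cast
    field_simp
    ring
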